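/- Fix reals 0 < c < u. (i) If σ ∈ [0,1), let ζ^f = (f(u) − f(c))/(u − c); then t^f = ((σ−1)·(f(c) − ζ^f·c)) / (ζ^f·(2−σ)) lies in [c,u] and is the unique point of [c,u] at which φ^f(c,u,·) attains its maximum over [c,u]. (ii) If σ ∈ (0,1), let ζ^g = (g(u) − g(c))/(u − c); then t^g = (σ·(g(c) − ζ^g·c)) / (ζ^g·(1−σ)) lies in [c,u] and is the unique point of [c,u] at which φ^g(c,u,·) attains its maximum over [c,u]. -/

import Mathlib

lemma keyCNL {A ζ e c u : ℝ} (hc : 0 < c) (hcu : c < u)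
    (hq : ζ * (1 + e) < 0)
    (hend : (A + ζ * c) * c ^ e = (A + ζ * u) * u ^ e) :
    -(A * e) / (ζ * (1 + e)) ∈ Set.Ioo c u ∧
    (∀ t ∈ Set.Icc c u, (A + ζ * t) * t ^ e ≤
      (A + ζ * (-(A * e) / (ζ * (1 + e)))) * (-(A * e) / (ζ * (1 + e))) ^ e) ∧
    (∀ s ∈ Set.Icc c u,
      (∀ t ∈ Set.Icc c u, (A + ζ * t) * t ^ e ≤ (A + ζ * s) * s ^ e) →
      s = -(A * e) / (ζ * (1 + e))) := by
  set τ : ℝ := -(A * e) / (ζ * (1 + e)) with hτdef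
  set F : ℝ → ℝ := fun t => (A + ζ * t) * t ^ e with hFdef
  have hqne : ζ * (1 + e) ≠ 0 := ne_of_lt hq
  have hτ0 : A * e + ζ * (1 + e) * τ = 0 := by
    rw [hτdef, mul_div_assoc', mul_comm (ζ * (1 + e)), mul_div_assoc, div_self hqne]; ring
  have hderiv : ∀ t : ℝ, 0 < t →
      HasDerivAt F (t ^ (e - 1) * (A * e + ζ * (1 + e) * t)) t := by
    intro t ht
    have h1 : HasDerivAt (fun s : ℝ => A + ζ * s) ζ t := by
      simpa using ((hasDerivAt_id t).const_mul ζ).const_add A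
    have h2 : HasDerivAt (fun s : ℝ => s ^ e) (e * t ^ (e - 1)) t :=
      Real.hasDerivAt_rpow_const (Or.inl ht.ne')
    have := h1.mul h2
    refine this.congr_deriv ?_
    have hte : t ^ (e - 1) * t = t ^ e := by
      rw [← Real.rpow_add_one ht.ne', sub_add_cancel]
    rw [← hte]; ring
  have hPpos : ∀ t : ℝ, t < τ → 0 < A * e + ζ * (1 + e) * t := by
    intro t h
    have h2 : 0 < ζ * (1 + e) * (t - τ) := mul_pos_of_neg_of_neg hq (by linarith)
    have h3 : ζ * (1 + e) * (t - τ) = ζ * (1 + e) * t - ζ * (1 + e) * τ := by ring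
    linarith
  have hPneg : ∀ t : ℝ, τ < t → A * e + ζ * (1 + e) * t < 0 := by
    intro t h
    have h2 : ζ * (1 + e) * (t - τ) < 0 := mul_neg_of_neg_of_pos hq (by linarith)
    have h3 : ζ * (1 + e) * (t - τ) = ζ * (1 + e) * t - ζ * (1 + e) * τ := by ring
    linarith
  have hmono : ∀ a b : ℝ, 0 < a → b ≤ τ → StrictMonoOn F (Set.Icc a b) := by
    intro a b ha hb
    apply strictMonoOn_of_deriv_pos (convex_Icc a b)
    · intro t ht
      exact (hderiv t (lt_of_lt_of_le ha ht.1)).continuousAt.continuousWithinAt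
    · intro t ht
      rw [interior_Icc] at ht
      have ht0 : 0 < t := ha.trans ht.1
      rw [(hderiv t ht0).deriv]
      exact mul_pos (Real.rpow_pos_of_pos ht0 _) (hPpos t (lt_of_lt_of_le ht.2 hb))
  have hanti : ∀ a b : ℝ, 0 < a → τ ≤ a → StrictAntiOn F (Set.Icc a b) := by
    intro a b ha hb
    apply strictAntiOn_of_deriv_neg (convex_Icc a b)
    · intro t ht
      exact (hderiv t (lt_of_lt_of_le ha ht.1)).continuousAt.continuousWithinAt
    · intro t ht
      rw [interior_Icc] at ht
      have ht0 : 0 < t := ha.trans ht.1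
      rw [(hderiv t ht0).deriv]
      exact mul_neg_of_pos_of_neg (Real.rpow_pos_of_pos ht0 _)
        (hPneg t (lt_of_le_of_lt hb ht.1))
  have hendF : F c = F u := hend
  have hcτ : c < τ := by
    by_contra h
    push_neg at h
    have := hanti c u hc h (Set.left_mem_Icc.2 hcu.le) (Set.right_mem_Icc.2 hcu.le) hcu
    rw [hendF] at this; exact lt_irrefl _ this
  have hτu : τ < u := by
    by_contra h
    push_neg at h
    have := hmono c u hc h (Set.left_mem_Icc.2 hcu.le) (Set.right_mem_Icc.2 hcu.le) hcu
    rw [hendF] at this; exact lt_irrefl _ this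
  refine ⟨⟨hcτ, hτu⟩, ?_, ?_⟩
  · intro t ht
    rcases le_total t τ with h | h
    · exact (hmono c τ hc le_rfl).monotoneOn ⟨ht.1, h⟩ ⟨hcτ.le, le_rfl⟩ h
    · exact (hanti τ u (hc.trans hcτ) le_rfl).antitoneOn ⟨le_rfl, hτu.le⟩ ⟨h, ht.2⟩ h
  · intro s hs hmax
    rcases lt_trichotomy s τ with h | h | h
    · have h1 : F s < F τ := hmono c τ hc le_rfl ⟨hs.1, h.le⟩ ⟨hcτ.le, le_rfl⟩ h
      have h2 : F τ ≤ F s := hmax τ ⟨hcτ.le, hτu.le⟩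
      exact absurd h1 (not_lt.2 h2)
    · exact h
    · have h1 : F s < F τ := hanti τ u (hc.trans hcτ) le_rfl ⟨le_rfl, hτu.le⟩ ⟨h.le, hs.2⟩ h
      have h2 : F τ ≤ F s := hmax τ ⟨hcτ.le, hτu.le⟩
      exact absurd h1 (not_lt.2 h2)

/-- f(t) = t^(σ-1) (real power). -/
noncomputable def fCNL (σ t : ℝ) : ℝ := t ^ (σ - 1)

/-- g(t) = t^σ (real power). -/
noncomputable def gCNL (σ t : ℝ) : ℝ := t ^ σ

/-- Chord (linear interpolation) approximation of f on [c,u], evaluated at t. -/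
noncomputable def fhat (σ c u t : ℝ) : ℝ :=
  fCNL σ c + ((fCNL σ u - fCNL σ c) / (u - c)) * (t - c)

/-- Chord (linear interpolation) approximation of g on [c,u], evaluated at t. -/
noncomputable def ghat (σ c u t : ℝ) : ℝ :=
  gCNL σ c + ((gCNL σ u - gCNL σ c) / (u - c)) * (t - c)

/-- Pointwise relative error of the chord approximation of f. -/
noncomputable def phiF (σ c u t : ℝ) : ℝ := (fhat σ c u t - fCNL σ t) / fCNL σ t

/-- Pointwise relative error of the chord approximation of g. -/
noncomputable def phiG (σ c u t : ℝ) : ℝ := (gCNL σ t - ghat σ c u t) / gCNL σ t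

/-- Maximum relative error of the chord approximation of f on [c,u]. -/
noncomputable def PhiF (σ c u : ℝ) : ℝ := sSup (phiF σ c u '' Set.Icc c u)

/-- Maximum relative error of the chord approximation of g on [c,u]. -/
noncomputable def PhiG (σ c u : ℝ) : ℝ := sSup (phiG σ c u '' Set.Icc c u)

/-- Proposition 1: the pointwise relative errors have unique maximizers on [c,u]. -/
theorem stmt_4 (σ c u : ℝ) (hc : 0 < c) (hcu : c < u) :
    (0 ≤ σ → σ < 1 →
      ((σ - 1) * (fCNL σ c - ((fCNL σ u - fCNL σ c) / (u - c)) * c)) /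
          (((fCNL σ u - fCNL σ c) / (u - c)) * (2 - σ)) ∈ Set.Icc c u ∧
      (∀ t ∈ Set.Icc c u, phiF σ c u t ≤
        phiF σ c u (((σ - 1) * (fCNL σ c - ((fCNL σ u - fCNL σ c) / (u - c)) * c)) /
          (((fCNL σ u - fCNL σ c) / (u - c)) * (2 - σ)))) ∧
      (∀ s ∈ Set.Icc c u, (∀ t ∈ Set.Icc c u, phiF σ c u t ≤ phiF σ c u s) →
        s = ((σ - 1) * (fCNL σ c - ((fCNL σ u - fCNL σ c) / (u - c)) * c)) /
          (((fCNL σ u - fCNL σ c) / (u - c)) * (2 - σ)))) ∧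
    (0 < σ → σ < 1 →
      (σ * (gCNL σ c - ((gCNL σ u - gCNL σ c) / (u - c)) * c)) /
          (((gCNL σ u - gCNL σ c) / (u - c)) * (1 - σ)) ∈ Set.Icc c u ∧
      (∀ t ∈ Set.Icc c u, phiG σ c u t ≤
        phiG σ c u ((σ * (gCNL σ c - ((gCNL σ u - gCNL σ c) / (u - c)) * c)) /
          (((gCNL σ u - gCNL σ c) / (u - c)) * (1 - σ)))) ∧
      (∀ s ∈ Set.Icc c u, (∀ t ∈ Set.Icc c u, phiG σ c u t ≤ phiG σ c u s) →
        s = (σ * (gCNL σ c - ((gCNL σ u - gCNL σ c) / (u - c)) * c)) /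
          (((gCNL σ u - gCNL σ c) / (u - c)) * (1 - σ)))) := by
  have hu0 : 0 < u := hc.trans hcu
  have huc : (0:ℝ) < u - c := sub_pos.2 hcu
  constructor
  · -- part (i)
    intro hσ0 hσ1
    set ζf : ℝ := (fCNL σ u - fCNL σ c) / (u - c) with hζf
    set Af : ℝ := fCNL σ c - ζf * c with hAf
    have hζneg : ζf < 0 := by
      apply div_neg_of_neg_of_pos _ huc
      have h1 : c ^ (1 - σ) < u ^ (1 - σ) := Real.rpow_lt_rpow hc.le hcu (by linarith)
      have h2 : u ^ (σ - 1) < c ^ (σ - 1) := by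
        rw [show σ - 1 = -(1 - σ) by ring, Real.rpow_neg hc.le, Real.rpow_neg hu0.le]
        exact inv_strictAnti₀ (Real.rpow_pos_of_pos hc _) h1
      simpa [fCNL] using sub_neg.2 h2
    have hq : ζf * (1 + (1 - σ)) < 0 :=
      mul_neg_of_neg_of_pos hζneg (by linarith)
    have hFc : (Af + ζf * c) * c ^ (1 - σ) = 1 := by
      have h1 : Af + ζf * c = c ^ (σ - 1) := by rw [hAf, fCNL]; ring
      rw [h1, ← Real.rpow_add hc]
      norm_num
    have hFu : (Af + ζf * u) * u ^ (1 - σ) = 1 := by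
      have h0 : ζf * (u - c) = fCNL σ u - fCNL σ c := by
        rw [hζf]; field_simp
      have h1 : Af + ζf * u = u ^ (σ - 1) := by
        have : Af + ζf * u = fCNL σ c + ζf * (u - c) := by rw [hAf]; ring
        rw [this, h0, fCNL, fCNL]; ring
      rw [h1, ← Real.rpow_add hu0]
      norm_num
    have hend : (Af + ζf * c) * c ^ (1 - σ) = (Af + ζf * u) * u ^ (1 - σ) := by
      rw [hFc, hFu]
    obtain ⟨hmem, hmax, huniq⟩ := keyCNL (A := Af) (ζ := ζf) (e := 1 - σ) hc hcu hq hend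
    have hT : ((σ - 1) * Af) / (ζf * (2 - σ)) = -(Af * (1 - σ)) / (ζf * (1 + (1 - σ))) := by
      rw [show (σ - 1) * Af = -(Af * (1 - σ)) by ring,
        show ζf * (2 - σ) = ζf * (1 + (1 - σ)) by ring]
    have hrew : ∀ t ∈ Set.Icc c u, phiF σ c u t = (Af + ζf * t) * t ^ (1 - σ) - 1 := by
      intro t ht
      have ht0 : 0 < t := lt_of_lt_of_le hc ht.1
      have hpow : (0:ℝ) < t ^ (σ - 1) := Real.rpow_pos_of_pos ht0 _
      have h1 : fhat σ c u t = Af + ζf * t := by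
        rw [fhat, hAf]; ring
      rw [phiF, h1, fCNL, sub_div, div_self hpow.ne']
      congr 1
      rw [div_eq_mul_inv, ← Real.rpow_neg ht0.le, neg_sub]
    refine ⟨?_, ?_, ?_⟩
    · rw [hT]; exact Set.Ioo_subset_Icc_self hmem
    · intro t ht
      have hτmem : -(Af * (1 - σ)) / (ζf * (1 + (1 - σ))) ∈ Set.Icc c u :=
        Set.Ioo_subset_Icc_self hmem
      rw [hT, hrew t ht, hrew _ hτmem]
      have := hmax t ht
      linarith
    · intro s hs hsm
      rw [hT]
      apply huniq s hs
      intro t ht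
      have := hsm t ht
      rw [hrew t ht, hrew s hs] at this
      linarith
  · -- part (ii)
    intro hσ0 hσ1
    set ζg : ℝ := (gCNL σ u - gCNL σ c) / (u - c) with hζg
    set Bg : ℝ := gCNL σ c - ζg * c with hBg
    have hζpos : 0 < ζg := by
      apply div_pos _ huc
      have : c ^ σ < u ^ σ := Real.rpow_lt_rpow hc.le hcu hσ0
      simpa [gCNL] using sub_pos.2 this
    have hq : (-ζg) * (1 + (-σ)) < 0 :=
      mul_neg_of_neg_of_pos (neg_neg_of_pos hζpos) (by linarith)
    have hFc : ((-Bg) + (-ζg) * c) * c ^ (-σ) = -1 := by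
      have h1 : (-Bg) + (-ζg) * c = -(c ^ σ) := by rw [hBg, gCNL]; ring
      rw [h1, neg_mul, ← Real.rpow_add hc]
      norm_num
    have hFu : ((-Bg) + (-ζg) * u) * u ^ (-σ) = -1 := by
      have h0 : ζg * (u - c) = gCNL σ u - gCNL σ c := by
        rw [hζg]; field_simp
      have h1 : (-Bg) + (-ζg) * u = -(u ^ σ) := by
        have h2 : Bg + ζg * u = gCNL σ c + ζg * (u - c) := by rw [hBg]; ring
        have h3 : Bg + ζg * u = u ^ σ := by rw [h2, h0, gCNL, gCNL]; ring
        linarith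
      rw [h1, neg_mul, ← Real.rpow_add hu0]
      norm_num
    have hend : ((-Bg) + (-ζg) * c) * c ^ (-σ) = ((-Bg) + (-ζg) * u) * u ^ (-σ) := by
      rw [hFc, hFu]
    obtain ⟨hmem, hmax, huniq⟩ := keyCNL (A := -Bg) (ζ := -ζg) (e := -σ) hc hcu hq hend
    have hT : (σ * Bg) / (ζg * (1 - σ)) = -((-Bg) * (-σ)) / ((-ζg) * (1 + (-σ))) := by
      rw [show -((-Bg) * (-σ)) = -(σ * Bg) by ring,
        show (-ζg) * (1 + (-σ)) = -(ζg * (1 - σ)) by ring, neg_div_neg_eq]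
    have hrew : ∀ t ∈ Set.Icc c u, phiG σ c u t = ((-Bg) + (-ζg) * t) * t ^ (-σ) + 1 := by
      intro t ht
      have ht0 : 0 < t := lt_of_lt_of_le hc ht.1
      have hpow : (0:ℝ) < t ^ σ := Real.rpow_pos_of_pos ht0 _
      have h1 : ghat σ c u t = Bg + ζg * t := by
        rw [ghat, hBg]; ring
      have hinv : t ^ (-σ) * t ^ σ = 1 := by
        rw [← Real.rpow_add ht0]; norm_num
      rw [phiG, h1, gCNL, div_eq_iff hpow.ne']
      linear_combination (Bg + ζg * t) * hinv
    refine ⟨?_, ?_, ?_⟩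
    · rw [hT]; exact Set.Ioo_subset_Icc_self hmem
    · intro t ht
      have hτmem : -((-Bg) * (-σ)) / ((-ζg) * (1 + (-σ))) ∈ Set.Icc c u :=
        Set.Ioo_subset_Icc_self hmem
      rw [hT, hrew t ht, hrew _ hτmem]
      have := hmax t ht
      linarith
    · intro s hs hsm
      rw [hT]
      apply huniq s hs
      intro t ht
      have := hsm t ht
      rw [hrew t ht, hrew s hs] at this
      linarith
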